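/- In the two-parameter algebra f, if x is homogeneous with r(x) = ∑ x₁⊗x₂ (homogeneous factors), then the bar involution satisfies r(x̄) = ∑ v^{-|x₁|·|x₂|} t^{⟨|x₂|,|x₁|⟩-⟨|x₁|,|x₂|⟩} x̄₂ ⊗ x̄₁. -/

import Mathlib

/-!
STATEMENT 17: In the two-parameter algebra, if x is homogeneous and
r(x) = ∑ x₁⊗x₂ (homogeneous factors), then the bar involution satisfies
r(x̄) = ∑ v^{-|x₁|·|x₂|} t^{⟨|x₂|,|x₁|⟩-⟨|x₁|,|x₂|⟩} x̄₂ ⊗ x̄₁.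

The free algebra 'f is modelled as finitely supported functions on words;
the bar involution fixes each θ_i (hence each word) and acts on scalars by the
ring endomorphism of ℚ(v,t) with v ↦ v⁻¹, t ↦ t (which is unique, since v and
t generate ℚ(v,t) as a field).  The right-hand side applies, to each
bihomogeneous component c·(p,q) of r(x), the twist
v^{-wt(p)·wt(q)} t^{⟨wt(q),wt(p)⟩-⟨wt(p),wt(q)⟩}·bar(c)·(q,p).
-/

noncomputable section

abbrev QVT := FractionRing (MvPolynomial (Fin 2) ℚ)

def v : QVT := algebraMap (MvPolynomial (Fin 2) ℚ) QVT (MvPolynomial.X 0)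

def t : QVT := algebraMap (MvPolynomial (Fin 2) ℚ) QVT (MvPolynomial.X 1)

variable {I : Type*} [Fintype I] [DecidableEq I]

abbrev FF (I : Type*) := FreeMonoid I →₀ QVT

abbrev GG (I : Type*) := (FreeMonoid I × FreeMonoid I) →₀ QVT

def wt (w : FreeMonoid I) : I →₀ ℕ :=
  (w.toList.map fun i => Finsupp.single i 1).sum

def pairF (C : I → I → ℤ) (a b : I →₀ ℕ) : ℤ :=
  a.sum fun i m => b.sum fun j n => (m : ℤ) * C i j * (n : ℤ)

def dotF (C : I → I → ℤ) (a b : I →₀ ℕ) : ℤ :=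
  pairF C a b + pairF C b a

def tw (C : I → I → ℤ) (a b : I →₀ ℕ) : QVT :=
  v ^ (-(dotF C a b)) * t ^ (pairF C a b - pairF C b a)

def mulG (C : I → I → ℤ) (f g : GG I) : GG I :=
  f.sum fun p c => g.sum fun q d =>
    Finsupp.single (p.1 * q.1, p.2 * q.2) (tw C (wt q.1) (wt p.2) * (c * d))

def rW (C : I → I → ℤ) : List I → GG I
  | [] => Finsupp.single (1, 1) 1
  | i :: w =>
      mulG C
        (Finsupp.single (FreeMonoid.of i, 1) 1 + Finsupp.single (1, FreeMonoid.of i) 1)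
        (rW C w)

def rF (C : I → I → ℤ) (f : FF I) : GG I :=
  f.sum fun p c => c • rW C p.toList

/-- The bar involution on 'f: it fixes each word and conjugates scalars by the
bar involution of ℚ(v,t). -/
def barF (barK : QVT →+* QVT) (f : FF I) : FF I :=
  f.mapRange barK (map_zero barK)

-- auxiliary lemmas

lemma v_ne_zero : (v : QVT) ≠ 0 := by
  simpa [v, map_ne_zero_iff _ (IsFractionRing.injective (MvPolynomial (Fin 2) ℚ) QVT)]
    using MvPolynomial.X_ne_zero (R := ℚ) (0 : Fin 2)

lemma t_ne_zero : (t : QVT) ≠ 0 := by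
  simpa [t, map_ne_zero_iff _ (IsFractionRing.injective (MvPolynomial (Fin 2) ℚ) QVT)]
    using MvPolynomial.X_ne_zero (R := ℚ) (1 : Fin 2)

lemma vt_mul (e1 f1 e2 f2 : ℤ) :
    (v ^ e1 * t ^ f1) * (v ^ e2 * t ^ f2) = v ^ (e1 + e2) * t ^ (f1 + f2) := by
  rw [zpow_add₀ v_ne_zero, zpow_add₀ t_ne_zero]; ring

lemma pairF_zero_left (C : I → I → ℤ) (b : I →₀ ℕ) : pairF C 0 b = 0 := by
  simp [pairF]

lemma pairF_zero_right (C : I → I → ℤ) (a : I →₀ ℕ) : pairF C a 0 = 0 := by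
  simp [pairF]

lemma pairF_add_left (C : I → I → ℤ) (a b c : I →₀ ℕ) :
    pairF C (a + b) c = pairF C a c + pairF C b c := by
  unfold pairF
  rw [Finsupp.sum_add_index']
  · intro i; simp
  · intro i m n
    rw [← Finsupp.sum_add]
    congr 1; funext j k; push_cast; ring

lemma pairF_add_right (C : I → I → ℤ) (a b c : I →₀ ℕ) :
    pairF C a (b + c) = pairF C a b + pairF C a c := by
  unfold pairF
  rw [← Finsupp.sum_add]
  congr 1; funext i m
  rw [Finsupp.sum_add_index']
  · intro j; simp
  · intro j k l; push_cast; ring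

lemma dotF_comm (C : I → I → ℤ) (a b : I →₀ ℕ) : dotF C a b = dotF C b a := by
  simp [dotF, add_comm]

lemma wt_one : wt (1 : FreeMonoid I) = 0 := by
  simp [wt]

lemma wt_mul (p q : FreeMonoid I) : wt (p * q) = wt p + wt q := by
  simp [wt, FreeMonoid.toList_mul]

lemma tw_zero_left (C : I → I → ℤ) (b : I →₀ ℕ) : tw C 0 b = 1 := by
  simp [tw, dotF, pairF_zero_left, pairF_zero_right]

lemma tw_zero_right (C : I → I → ℤ) (a : I →₀ ℕ) : tw C a 0 = 1 := by
  simp [tw, dotF, pairF_zero_left, pairF_zero_right]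

section Phi

variable (C : I → I → ℤ) (barK : QVT →+* QVT)

def phi (g : GG I) : GG I :=
  g.sum fun p c => Finsupp.single (p.2, p.1) (tw C (wt p.2) (wt p.1) * barK c)

lemma phi_zero : phi C barK (0 : GG I) = 0 := Finsupp.sum_zero_index

lemma phi_single (p : FreeMonoid I × FreeMonoid I) (c : QVT) :
    phi C barK (Finsupp.single p c)
      = Finsupp.single (p.2, p.1) (tw C (wt p.2) (wt p.1) * barK c) := by
  unfold phi
  rw [Finsupp.sum_single_index]
  simp

lemma phi_add (f g : GG I) : phi C barK (f + g) = phi C barK f + phi C barK g := by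
  unfold phi
  rw [Finsupp.sum_add_index']
  · intro p; simp
  · intro p c d; rw [map_add, mul_add, Finsupp.single_add]

lemma phi_smul (c : QVT) (g : GG I) :
    phi C barK (c • g) = barK c • phi C barK g := by
  unfold phi
  rw [Finsupp.smul_sum, Finsupp.sum_smul_index]
  · congr 1; funext p d
    simp only [smul_eq_mul, map_mul, Finsupp.smul_single]
    congr 1; ring
  · intro p; simp

lemma mulG_single_single (p q : FreeMonoid I × FreeMonoid I) (c d : QVT) :
    mulG C (Finsupp.single p c) (Finsupp.single q d)
      = Finsupp.single (p.1 * q.1, p.2 * q.2) (tw C (wt q.1) (wt p.2) * (c * d)) := by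
  unfold mulG
  rw [Finsupp.sum_single_index, Finsupp.sum_single_index]
  · simp
  · simp

lemma mulG_zero_left (g : GG I) : mulG C 0 g = 0 := Finsupp.sum_zero_index

lemma mulG_zero_right (f : GG I) : mulG C f 0 = 0 := by
  unfold mulG; simp

lemma mulG_add_left (f1 f2 g : GG I) :
    mulG C (f1 + f2) g = mulG C f1 g + mulG C f2 g := by
  unfold mulG
  rw [Finsupp.sum_add_index']
  · intro p; simp
  · intro p c d
    rw [← Finsupp.sum_add]
    congr 1; funext q e
    rw [← Finsupp.single_add, ← mul_add, add_mul]

lemma mulG_add_right (f g1 g2 : GG I) :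
    mulG C f (g1 + g2) = mulG C f g1 + mulG C f g2 := by
  unfold mulG
  rw [← Finsupp.sum_add]
  congr 1; funext p c
  rw [Finsupp.sum_add_index']
  · intro q; simp
  · intro q d e
    rw [← Finsupp.single_add, ← mul_add, mul_add]

variable (hv : barK v = v⁻¹) (ht : barK t = t)

include hv ht in
lemma barK_tw (a b : I →₀ ℕ) :
    barK (tw C a b) = v ^ (dotF C a b) * t ^ (pairF C a b - pairF C b a) := by
  rw [tw, map_mul, map_zpow₀, map_zpow₀, hv, ht, inv_zpow, ← zpow_neg, neg_neg]

include hv ht in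
lemma key_scalar (a1 a2 b1 b2 : I →₀ ℕ) :
    tw C (a2 + b2) (a1 + b1) * barK (tw C b1 a2)
      = tw C b2 a1 * (tw C a2 a1 * tw C b2 b1) := by
  rw [barK_tw C barK hv ht]
  simp only [tw, vt_mul]
  congr 1
  · congr 1
    simp only [dotF, pairF_add_left, pairF_add_right]; ring
  · congr 1
    simp only [pairF_add_left, pairF_add_right]; ring

include hv ht in
lemma phi_mulG (f g : GG I) :
    phi C barK (mulG C f g) = mulG C (phi C barK f) (phi C barK g) := by
  induction f using Finsupp.induction with
  | zero => rw [mulG_zero_left, phi_zero, mulG_zero_left]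
  | single_add p c f _ _ ih =>
    rw [mulG_add_left, phi_add, phi_add, mulG_add_left, ih]
    clear ih
    congr 1
    induction g using Finsupp.induction with
    | zero => rw [mulG_zero_right, phi_zero, mulG_zero_right]
    | single_add q d g _ _ ihg =>
      rw [mulG_add_right, phi_add, phi_add, mulG_add_right, ihg]
      congr 1
      rw [mulG_single_single, phi_single, phi_single, phi_single, mulG_single_single]
      simp only [wt_mul]
      congr 1
      calc tw C (wt p.2 + wt q.2) (wt p.1 + wt q.1) * barK (tw C (wt q.1) (wt p.2) * (c * d))
          = (tw C (wt p.2 + wt q.2) (wt p.1 + wt q.1) * barK (tw C (wt q.1) (wt p.2)))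
              * (barK c * barK d) := by rw [map_mul, map_mul]; ring
        _ = (tw C (wt q.2) (wt p.1) * (tw C (wt p.2) (wt p.1) * tw C (wt q.2) (wt q.1)))
              * (barK c * barK d) := by rw [key_scalar C barK hv ht]
        _ = tw C (wt q.2) (wt p.1) *
              (tw C (wt p.2) (wt p.1) * barK c * (tw C (wt q.2) (wt q.1) * barK d)) := by ring

include hv ht in
lemma phi_rW (l : List I) : phi C barK (rW C l) = rW C l := by
  induction l with
  | nil =>
    rw [rW, phi_single]
    simp [wt_one, tw_zero_left]
  | cons i l ih =>
    rw [rW, phi_mulG C barK hv ht, ih, phi_add, phi_single, phi_single]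
    simp [wt_one, tw_zero_left, tw_zero_right, add_comm]

end Phi


theorem bar_comultiplication (C : I → I → ℤ)
    (barK : QVT →+* QVT) (hv : barK v = v⁻¹) (ht : barK t = t)
    (x : FF I) (ν : I →₀ ℕ) (hx : ∀ w ∈ x.support, wt w = ν) :
    rF C (barF barK x)
      = (rF C x).sum fun p c =>
          Finsupp.single (p.2, p.1)
            (v ^ (-(dotF C (wt p.1) (wt p.2)))
              * t ^ (pairF C (wt p.2) (wt p.1) - pairF C (wt p.1) (wt p.2))
              * barK c) := by

  have hrhs : ((rF C x).sum fun p c =>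
      Finsupp.single (p.2, p.1)
        (v ^ (-(dotF C (wt p.1) (wt p.2)))
          * t ^ (pairF C (wt p.2) (wt p.1) - pairF C (wt p.1) (wt p.2))
          * barK c)) = phi C barK (rF C x) := by
    unfold phi
    congr 1; funext p c
    rw [tw, dotF_comm C (wt p.2) (wt p.1)]
  rw [hrhs]
  clear hrhs
  unfold rF barF
  rw [Finsupp.sum_mapRange_index (by intro p; rw [zero_smul])]
  clear hx
  induction x using Finsupp.induction with
  | zero => simp [phi_zero]
  | single_add w c f _ _ ih =>
    conv_lhs => rw [Finsupp.sum_add_index' (fun p => by simp) (fun p c d => by rw [map_add, add_smul]),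
      Finsupp.sum_single_index (by simp)]
    conv_rhs => rw [Finsupp.sum_add_index' (fun p => by simp) (fun p c d => by rw [add_smul]),
      Finsupp.sum_single_index (by simp)]
    rw [phi_add, phi_smul, phi_rW C barK hv ht, ih]


end
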